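/- Let k be a positive integer and α > 0 a real number. For every function u : {0,1}^k → ZMod 2, the number of strings z ∈ {0,1}^k such that |{r ∈ {0,1}^k : u(r) = b(z,r)}| ≥ (1/2 + α)·2^k is at most 1/(4α²). -/

import Mathlib

open scoped Classical

noncomputable def chi (a : ZMod 2) : ℝ := if a = 0 then 1 else -1

theorem zmod2_cases (a : ZMod 2) : a = 0 ∨ a = 1 := by revert a; decide

lemma chi_zero : chi 0 = 1 := by simp [chi]

lemma chi_add (a b : ZMod 2) : chi (a + b) = chi a * chi b := by
  fin_cases a <;> fin_cases b <;> unfold chi <;> split_ifs <;> simp_all <;> contradiction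

lemma chi_sq (a : ZMod 2) : chi a * chi a = 1 := by
  fin_cases a <;> unfold chi <;> split_ifs <;> simp_all

lemma chi_sum {ι : Type*} (s : Finset ι) (f : ι → ZMod 2) :
    chi (∑ i ∈ s, f i) = ∏ i ∈ s, chi (f i) := by
  classical
  induction s using Finset.cons_induction with
  | empty => simp [chi_zero]
  | cons a s ha ih => rw [Finset.sum_cons, Finset.prod_cons, chi_add, ih]

lemma sum_chi_two (c : ZMod 2) :
    ∑ a : ZMod 2, chi (a * c) = if c = 0 then 2 else 0 := by
  have h : (Finset.univ : Finset (ZMod 2)) = {0, 1} := by decide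
  rcases zmod2_cases c with rfl | rfl <;> rw [h] <;> norm_num [chi]

lemma orth {k : ℕ} (s : Fin k → ZMod 2) :
    ∑ z : Fin k → ZMod 2, chi (∑ i, z i * s i) = if s = 0 then 2 ^ k else 0 := by
  classical
  have h1 : ∑ z : Fin k → ZMod 2, chi (∑ i, z i * s i)
      = ∏ i, ∑ a : ZMod 2, chi (a * s i) := by
    rw [Fintype.prod_sum (fun i a => chi (a * s i))]
    exact Finset.sum_congr rfl fun z _ => chi_sum _ _
  rw [h1]
  by_cases hs : s = 0
  · simp [hs, sum_chi_two, chi_zero]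
  · obtain ⟨i, hi⟩ : ∃ i, s i ≠ 0 := by
      by_contra h; push_neg at h; exact hs (funext h)
    rw [Finset.prod_eq_zero (Finset.mem_univ i) (by simp [sum_chi_two, hi]), if_neg hs]

lemma chi_mul_eq (a b : ZMod 2) : chi a * chi b = if a = b then (1:ℝ) else -1 := by
  rcases zmod2_cases a with rfl | rfl <;> rcases zmod2_cases b with rfl | rfl <;> simp [chi]

lemma fun_add_eq_zero {k : ℕ} (r r' : Fin k → ZMod 2) : r + r' = 0 ↔ r' = r := by
  have h2 : ∀ a b : ZMod 2, a + b = 0 ↔ b = a := by decide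
  constructor
  · intro h; funext i; exact (h2 _ _).mp (congrFun h i)
  · intro h; funext i; exact (h2 (r i) (r' i)).mpr (congrFun h i)

theorem stmt6 (k : ℕ) (hk : 0 < k) (α : ℝ) (hα : 0 < α)
    (u : (Fin k → ZMod 2) → ZMod 2) :
    ((Finset.univ.filter (fun z : Fin k → ZMod 2 =>
        (1 / 2 + α) * 2 ^ k ≤
          ((Finset.univ.filter (fun r : Fin k → ZMod 2 =>
            u r = ∑ i, z i * r i)).card : ℝ))).card : ℝ)
      ≤ 1 / (4 * α ^ 2) := by
  classical
  set T : (Fin k → ZMod 2) → ℝ :=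
    fun z => ∑ r, chi (u r) * chi (∑ i, z i * r i) with hT
  have hcard : ((Finset.univ : Finset (Fin k → ZMod 2)).card : ℝ) = 2 ^ k := by
    simp [Finset.card_univ]
  -- T z = 2*N(z) - 2^k
  have hTN : ∀ z : Fin k → ZMod 2,
      T z = 2 * ((Finset.univ.filter (fun r : Fin k → ZMod 2 =>
        u r = ∑ i, z i * r i)).card : ℝ) - 2 ^ k := by
    intro z
    have : T z = ∑ r : Fin k → ZMod 2,
        (2 * (if u r = ∑ i, z i * r i then (1:ℝ) else 0) - 1) := by
      refine Finset.sum_congr rfl fun r _ => ?_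
      rw [chi_mul_eq]; split <;> norm_num
    rw [this, Finset.sum_sub_distrib, ← Finset.mul_sum, Finset.sum_boole,
      Finset.sum_const, nsmul_eq_mul, mul_one, hcard]
  -- lower bound on good z
  have hTlow : ∀ z ∈ Finset.univ.filter (fun z : Fin k → ZMod 2 =>
      (1 / 2 + α) * 2 ^ k ≤
        ((Finset.univ.filter (fun r : Fin k → ZMod 2 =>
          u r = ∑ i, z i * r i)).card : ℝ)),
      2 * α * 2 ^ k ≤ T z := by
    intro z hz
    rw [Finset.mem_filter] at hz
    rw [hTN z]; linarith [hz.2]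
  -- Parseval: ∑ z, (T z)^2 = 2^k * 2^k
  have hB : ∑ z : Fin k → ZMod 2, (T z) ^ 2 = (2:ℝ) ^ k * 2 ^ k := by
    have hsq : ∀ z : Fin k → ZMod 2, (T z) ^ 2 =
        ∑ r : Fin k → ZMod 2, ∑ r' : Fin k → ZMod 2,
          (chi (u r) * chi (u r')) * chi (∑ i, z i * (r + r') i) := by
      intro z
      rw [sq, hT, Finset.sum_mul_sum]
      refine Finset.sum_congr rfl fun r _ => Finset.sum_congr rfl fun r' _ => ?_
      have h1 : chi (∑ i, z i * r i) * chi (∑ i, z i * r' i)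
          = chi (∑ i, z i * (r + r') i) := by
        rw [← chi_add, ← Finset.sum_add_distrib]
        congr 1
        refine Finset.sum_congr rfl fun i _ => ?_
        simp [Pi.add_apply, mul_add]
      rw [← h1]; ring
    calc ∑ z : Fin k → ZMod 2, (T z) ^ 2
        = ∑ r : Fin k → ZMod 2, ∑ r' : Fin k → ZMod 2,
            (chi (u r) * chi (u r')) *
              (∑ z : Fin k → ZMod 2, chi (∑ i, z i * (r + r') i)) := by
          simp_rw [hsq]
          rw [Finset.sum_comm]
          refine Finset.sum_congr rfl fun r _ => ?_
          rw [Finset.sum_comm]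
          refine Finset.sum_congr rfl fun r' _ => ?_
          rw [Finset.mul_sum]
      _ = ∑ r : Fin k → ZMod 2, ∑ r' : Fin k → ZMod 2,
            (if r' = r then (chi (u r) * chi (u r')) * 2 ^ k else 0) := by
          refine Finset.sum_congr rfl fun r _ => Finset.sum_congr rfl fun r' _ => ?_
          rw [orth]
          simp only [fun_add_eq_zero]
          split <;> simp
      _ = ∑ r : Fin k → ZMod 2, (chi (u r) * chi (u r)) * 2 ^ k := by
          refine Finset.sum_congr rfl fun r _ => ?_
          rw [Finset.sum_ite_eq' Finset.univ r]
          simp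
      _ = (2:ℝ) ^ k * 2 ^ k := by
          simp_rw [chi_sq, one_mul, Finset.sum_const, nsmul_eq_mul]
          rw [hcard]
  set S := Finset.univ.filter (fun z : Fin k → ZMod 2 =>
      (1 / 2 + α) * 2 ^ k ≤
        ((Finset.univ.filter (fun r : Fin k → ZMod 2 =>
          u r = ∑ i, z i * r i)).card : ℝ)) with hS
  have hpos : (0:ℝ) ≤ 2 * α * 2 ^ k := by positivity
  have hmain : (S.card : ℝ) * (2 * α * 2 ^ k) ^ 2 ≤ (2:ℝ) ^ k * 2 ^ k := by
    calc (S.card : ℝ) * (2 * α * 2 ^ k) ^ 2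
        = ∑ _z ∈ S, (2 * α * 2 ^ k) ^ 2 := by
          rw [Finset.sum_const, nsmul_eq_mul]
      _ ≤ ∑ z ∈ S, (T z) ^ 2 :=
          Finset.sum_le_sum fun z hz => pow_le_pow_left₀ hpos (hTlow z hz) 2
      _ ≤ ∑ z : Fin k → ZMod 2, (T z) ^ 2 :=
          Finset.sum_le_sum_of_subset_of_nonneg (Finset.subset_univ S)
            (fun z _ _ => sq_nonneg _)
      _ = (2:ℝ) ^ k * 2 ^ k := hB
  have h2k : (0:ℝ) < 2 ^ k := by positivity
  rw [le_div_iff₀ (by positivity : (0:ℝ) < 4 * α ^ 2)]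
  have hexp : (2 * α * 2 ^ k) ^ 2 = (4 * α ^ 2) * (2 ^ k * 2 ^ k) := by ring
  rw [hexp] at hmain
  have hP : (0:ℝ) < 2 ^ k * 2 ^ k := by positivity
  have h1 : ((S.card:ℝ) * (4 * α ^ 2)) * (2 ^ k * 2 ^ k) ≤ 1 * (2 ^ k * 2 ^ k) := by
    rw [one_mul, mul_assoc]; exact hmain
  exact le_of_mul_le_mul_right h1 hP
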